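/- Let (C, ω, τ) be a noncommutative probability space with tracial weight, let (A, B) be cyclically monotone ∗-subalgebras with 1 ∈ B, let a_1,…,a_k ∈ A be self-adjoint and b_1,…,b_k ∈ B. Set B̂ = (τ(b_i^∗ b_j))_{i,j=1}^k ∈ M_k(ℂ) and let √B̂ be its positive square root. Then for every n ∈ ℕ: ω((∑_{i=1}^k b_i a_i b_i^∗)^n) = (Tr_k ⊗ ω)((√B̂ · diag(a_1,…,a_k) · √B̂)^n), where Tr_k is the non-normalized trace on M_k(ℂ) and the right-hand side is computed in M_k(ℂ) ⊗ C. -/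

import Mathlib

open scoped ComplexOrder

/-- The positive semidefinite square root of a positive semidefinite matrix
(the definition `Matrix.PosSemidef.sqrt` of the older Mathlib, since removed). -/
noncomputable def Matrix.PosSemidef.sqrt {n 𝕜 : Type*} [Fintype n] [DecidableEq n] [RCLike 𝕜]
    {A : Matrix n n 𝕜} (hA : A.PosSemidef) : Matrix n n 𝕜 :=
  hA.1.eigenvectorUnitary.1 * Matrix.diagonal ((↑) ∘ (√·) ∘ hA.1.eigenvalues) *
    (star hA.1.eigenvectorUnitary : Matrix n n 𝕜)

lemma Matrix.PosSemidef.sqrt_mul_self {n 𝕜 : Type*} [Fintype n] [DecidableEq n] [RCLike 𝕜]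
    {A : Matrix n n 𝕜} (hA : A.PosSemidef) : hA.sqrt * hA.sqrt = A := by
  conv_rhs => rw [hA.1.spectral_theorem, Unitary.conjStarAlgAut_apply]
  unfold Matrix.PosSemidef.sqrt
  have hU : (star hA.1.eigenvectorUnitary : Matrix n n 𝕜) * hA.1.eigenvectorUnitary.1 = 1 :=
    Unitary.coe_star_mul_self _
  rw [show ∀ X Y Z W V : Matrix n n 𝕜, X * Y * Z * (W * V * Z) = X * (Y * (Z * W * V)) * Z by
    intros; simp only [Matrix.mul_assoc], hU, Matrix.one_mul, Matrix.diagonal_mul_diagonal]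
  congr 3
  funext i
  simp only [Function.comp_apply]
  rw [← RCLike.ofReal_mul, Real.mul_self_sqrt (hA.eigenvalues_nonneg i)]

open Matrix

/-- Path extension: node sequence `i, f 0, …, f (n-1), j, j, j, …` as a function on ℕ. -/
def pext {k n : ℕ} (i : Fin k) (f : Fin n → Fin k) (j : Fin k) : ℕ → Fin k :=
  fun t => if t = 0 then i else if h : t - 1 < n then f ⟨t - 1, h⟩ else j

lemma pext_zero {k n : ℕ} (i : Fin k) (f : Fin n → Fin k) (j : Fin k) :
    pext i f j 0 = i := rfl

lemma pext_succ {k n : ℕ} (i s : Fin k) (f : Fin n → Fin k) (j : Fin k) (t : ℕ) :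
    pext i (Fin.cons s f) j (t + 1) = pext s f j t := by
  unfold pext
  rcases t with _ | r
  · simp
  · simp only [Nat.succ_ne_zero, if_false, Nat.add_sub_cancel]
    by_cases h : r < n
    · rw [dif_pos (by omega : r + 1 < n + 1), dif_pos h]
      exact @Fin.cons_succ _ (fun _ => Fin k) s f ⟨r, h⟩
    · rw [dif_neg (by omega), dif_neg h]

lemma aux_smul_range_prod {C : Type*} [Ring C] [Algebra ℂ C]
    (n : ℕ) (c : ℕ → ℂ) (d : ℕ → C) :
    ((List.range n).map (fun t => c t • d t)).prod
      = (∏ t ∈ Finset.range n, c t) • ((List.range n).map d).prod := by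
  induction n with
  | zero => simp
  | succ p ih =>
    rw [List.range_succ, List.map_append, List.map_append, List.prod_append,
      List.prod_append, ih, Finset.prod_range_succ]
    simp only [List.map_cons, List.map_nil, List.prod_cons, List.prod_nil, mul_one,
      smul_mul_assoc, mul_smul_comm, smul_smul, mul_comm]

section traces
variable {C : Type*} [Ring C] [Algebra ℂ C] (ω : C →ₗ[ℂ] ℂ)
set_option linter.unusedSectionVars false

lemma aux_cyc {ι κ : Type*} [Fintype ι] [Fintype κ]
    (hωtr : ∀ x y : C, ω (x * y) = ω (y * x)) (X : Matrix ι κ C) (Y : Matrix κ ι C) :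
    ∑ i, ω ((X * Y) i i) = ∑ j, ω ((Y * X) j j) := by
  simp only [Matrix.mul_apply, map_sum]
  rw [Finset.sum_comm]
  exact Finset.sum_congr rfl fun j _ => Finset.sum_congr rfl fun i _ => hωtr _ _

lemma aux_pow_split {ι κ : Type*} [Fintype ι] [Fintype κ] [DecidableEq ι] [DecidableEq κ]
    (X : Matrix ι κ C) (Y : Matrix κ ι C) (m : ℕ) :
    (X * Y) ^ (m + 1) = X * ((Y * X) ^ m * Y) := by
  induction m with
  | zero => simp [Matrix.mul_assoc]
  | succ p ih =>
    rw [pow_succ, ih, pow_succ]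
    simp only [Matrix.mul_assoc]

lemma aux_cyc_pow {ι κ : Type*} [Fintype ι] [Fintype κ] [DecidableEq ι] [DecidableEq κ]
    (hωtr : ∀ x y : C, ω (x * y) = ω (y * x)) (X : Matrix ι κ C) (Y : Matrix κ ι C) (m : ℕ) :
    ∑ i, ω (((X * Y) ^ (m + 1)) i i) = ∑ j, ω (((Y * X) ^ (m + 1)) j j) := by
  rw [aux_pow_split, aux_cyc ω hωtr X ((Y * X) ^ m * Y), Matrix.mul_assoc, ← pow_succ]

lemma one_by_one_pow (X : Matrix (Fin 1) (Fin 1) C) (n : ℕ) :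
    (X ^ n) 0 0 = (X 0 0) ^ n := by
  induction n with
  | zero => simp [Matrix.one_apply]
  | succ p ih => rw [pow_succ, pow_succ, Matrix.mul_apply, Fin.sum_univ_one, ih]

end traces

lemma pow_entry_expand {C : Type*} [Ring C] {k : ℕ} (N : Matrix (Fin k) (Fin k) C) :
    ∀ (n : ℕ) (i j : Fin k), (N ^ (n + 1)) i j
      = ∑ f : Fin n → Fin k,
          ((List.range (n + 1)).map
            (fun t => N (pext i f j t) (pext i f j (t + 1)))).prod := by
  intro n
  induction n with
  | zero =>
    intro i j
    rw [pow_one, Fintype.sum_unique]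
    simp [pext, List.range_succ]
  | succ p ih =>
    intro i j
    rw [pow_succ', Matrix.mul_apply]
    simp_rw [ih, Finset.mul_sum]
    rw [← Equiv.sum_comp (Fin.consEquiv fun _ => Fin k)
        (fun f => ((List.range (p + 1 + 1)).map
          (fun t => N (pext i f j t) (pext i f j (t + 1)))).prod),
      Fintype.sum_prod_type]
    refine Finset.sum_congr rfl fun s _ => Finset.sum_congr rfl fun f _ => ?_
    have hkey : ∀ t : ℕ, pext i ((Fin.consEquiv fun _ => Fin k) (s, f)) j (t + 1)
        = pext s f j t := fun t => pext_succ i s f j t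
    conv_rhs => rw [List.range_succ_eq_map]
    rw [List.map_cons, List.map_map, List.prod_cons]
    congr 1
    · congr 1
      apply List.map_congr_left
      intro t _
      simp only [Function.comp_apply, Nat.succ_eq_add_one, hkey]

/-- Theorem 3.13(1): if `(A, B)` is cyclically monotone with respect to `(ω, τ)`,
`a_1,…,a_k ∈ A` self-adjoint and `b_1,…,b_k ∈ B`, and `B̂ = (τ(b_i^∗ b_j))_{ij}` with
positive square root `√B̂`, then for every `n ≥ 1`,
`ω((∑ b_i a_i b_i^∗)^n) = (Tr_k ⊗ ω)((√B̂ diag(a_1,…,a_k) √B̂)^n)`,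
where `(Tr_k ⊗ ω)(X) = ∑_i ω(X_{ii})` on `M_k(ℂ) ⊗ C`. -/
theorem sum_bab_cyclic_monotone
    {C : Type*} [Ring C] [StarRing C] [Algebra ℂ C] [StarModule ℂ C]
    (A : NonUnitalStarSubalgebra ℂ C) (B : StarSubalgebra ℂ C)
    (ω τ : C →ₗ[ℂ] ℂ)
    (hτ1 : τ 1 = 1)
    (hτtr : ∀ x y : C, τ (x * y) = τ (y * x))
    (hτstar : ∀ x : C, τ (star x) = starRingEnd ℂ (τ x))
    (hτpos : ∀ x : C, 0 ≤ τ (star x * x))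
    (hωtr : ∀ x y : C, ω (x * y) = ω (y * x))
    (hcm : ∀ (n : ℕ) (a b : ℕ → C), 1 ≤ n → (∀ i, a i ∈ A) → (∀ i, b i ∈ B) →
      ω (((List.range n).map (fun i => a i * b i)).prod)
        = ω (((List.range n).map a).prod) * ∏ i ∈ Finset.range n, τ (b i))
    (k : ℕ) (a b : Fin k → C)
    (ha : ∀ i, a i ∈ A) (has : ∀ i, IsSelfAdjoint (a i)) (hb : ∀ i, b i ∈ B)
    (hPSD : (Matrix.of fun i j : Fin k => τ (star (b i) * b j)).PosSemidef)
    (n : ℕ) (hn : 1 ≤ n) :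
    ω ((∑ i, b i * a i * star (b i)) ^ n)
      = ∑ i, ω ((((Matrix.of fun i j : Fin k =>
            ∑ s, (hPSD.sqrt i s * hPSD.sqrt s j) • a s) ^ n) i i)) := by
  obtain ⟨m, rfl⟩ : ∃ m, n = m + 1 := ⟨n - 1, by omega⟩
  have hD : ∀ i j, ((Matrix.diagonal a : Matrix (Fin k) (Fin k) C)
      * (hPSD.sqrt.map (algebraMap ℂ C))) i j = a i * algebraMap ℂ C (hPSD.sqrt i j) := by
    intro i j; rw [Matrix.diagonal_mul, Matrix.map_apply]
  -- the 1×1 matrix picture of the left-hand side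
  have hS : (∑ i, b i * a i * star (b i))
      = (((Matrix.of fun _ j => b j : Matrix (Fin 1) (Fin k) C))
        * ((Matrix.diagonal a) * (Matrix.of fun _ j => b j : Matrix (Fin 1) (Fin k) C)ᴴ)) 0 0 := by
    rw [Matrix.mul_apply]
    refine Finset.sum_congr rfl fun s _ => ?_
    rw [Matrix.diagonal_mul, Matrix.conjTranspose_apply]
    exact mul_assoc _ _ _
  have hG : ((Matrix.diagonal a) * (Matrix.of fun _ j => b j : Matrix (Fin 1) (Fin k) C)ᴴ)
        * (Matrix.of fun _ j => b j : Matrix (Fin 1) (Fin k) C)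
      = Matrix.of fun i j => a i * (star (b i) * b j) := by
    ext i j
    rw [Matrix.mul_apply, Fin.sum_univ_one, Matrix.diagonal_mul, Matrix.conjTranspose_apply]
    exact mul_assoc _ _ _
  -- the right-hand side matrices
  have hM : (Matrix.of fun i j : Fin k => ∑ s, (hPSD.sqrt i s * hPSD.sqrt s j) • a s)
      = (hPSD.sqrt.map (algebraMap ℂ C))
        * ((Matrix.diagonal a) * (hPSD.sqrt.map (algebraMap ℂ C))) := by
    ext i j
    simp only [Matrix.mul_apply, Matrix.of_apply, hD, Matrix.map_apply]
    refine Finset.sum_congr rfl fun s _ => ?_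
    rw [Algebra.smul_def, _root_.map_mul, mul_assoc, Algebra.commutes (hPSD.sqrt s j) (a s)]
  have hsq : (hPSD.sqrt.map (algebraMap ℂ C)) * (hPSD.sqrt.map (algebraMap ℂ C))
      = (Matrix.of fun i j : Fin k => τ (star (b i) * b j)).map (algebraMap ℂ C) := by
    rw [← Matrix.map_mul, hPSD.sqrt_mul_self]
  have hN' : ((Matrix.diagonal a) * (hPSD.sqrt.map (algebraMap ℂ C)))
        * (hPSD.sqrt.map (algebraMap ℂ C))
      = Matrix.of fun i j => τ (star (b i) * b j) • a i := by
    rw [Matrix.mul_assoc, hsq]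
    ext i j
    rw [Matrix.diagonal_mul, Matrix.map_apply, Matrix.of_apply, Matrix.of_apply,
      ← Algebra.commutes, ← Algebra.smul_def]
  -- comparison of path products via cyclic monotone independence
  have key : ∀ (i : Fin k) (f : Fin m → Fin k),
      ω (((List.range (m + 1)).map (fun t =>
        (Matrix.of fun i j => a i * (star (b i) * b j))
          (pext i f i t) (pext i f i (t + 1)))).prod)
      = ω (((List.range (m + 1)).map (fun t =>
        (Matrix.of fun i j => τ (star (b i) * b j) • a i)
          (pext i f i t) (pext i f i (t + 1)))).prod) := by
    intro i f
    set q := pext i f i with hq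
    have h1 : ω (((List.range (m + 1)).map
          (fun t => a (q t) * (star (b (q t)) * b (q (t + 1))))).prod)
        = ω (((List.range (m + 1)).map (fun t => a (q t))).prod)
          * ∏ t ∈ Finset.range (m + 1), τ (star (b (q t)) * b (q (t + 1))) :=
      hcm (m + 1) (fun t => a (q t)) (fun t => star (b (q t)) * b (q (t + 1)))
        (by omega) (fun t => ha _) (fun t => mul_mem (star_mem (hb _)) (hb _))
    have h2 : ((List.range (m + 1)).map
          (fun t => τ (star (b (q t)) * b (q (t + 1))) • a (q t))).prod
        = (∏ t ∈ Finset.range (m + 1), τ (star (b (q t)) * b (q (t + 1))))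
          • ((List.range (m + 1)).map (fun t => a (q t))).prod :=
      aux_smul_range_prod (m + 1) (fun t => τ (star (b (q t)) * b (q (t + 1))))
        (fun t => a (q t))
    show ω (((List.range (m + 1)).map
        (fun t => a (q t) * (star (b (q t)) * b (q (t + 1))))).prod)
      = ω (((List.range (m + 1)).map
        (fun t => τ (star (b (q t)) * b (q (t + 1))) • a (q t))).prod)
    rw [h1, h2, LinearMap.map_smul, smul_eq_mul, mul_comm]
  calc
    ω ((∑ i, b i * a i * star (b i)) ^ (m + 1))
        = ∑ i : Fin 1, ω ((((Matrix.of fun _ j => b j : Matrix (Fin 1) (Fin k) C)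
            * ((Matrix.diagonal a)
              * (Matrix.of fun _ j => b j : Matrix (Fin 1) (Fin k) C)ᴴ)) ^ (m + 1)) i i) := by
          rw [Fin.sum_univ_one, one_by_one_pow, hS]
    _ = ∑ j, ω (((((Matrix.diagonal a)
            * (Matrix.of fun _ j => b j : Matrix (Fin 1) (Fin k) C)ᴴ)
            * (Matrix.of fun _ j => b j : Matrix (Fin 1) (Fin k) C)) ^ (m + 1)) j j) :=
          aux_cyc_pow ω hωtr _ _ m
    _ = ∑ j, ω ((((Matrix.of fun i j => a i * (star (b i) * b j)) :
            Matrix (Fin k) (Fin k) C) ^ (m + 1)) j j) := by rw [hG]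
    _ = ∑ i, ∑ f : Fin m → Fin k, ω (((List.range (m + 1)).map (fun t =>
            (Matrix.of fun i j => a i * (star (b i) * b j))
              (pext i f i t) (pext i f i (t + 1)))).prod) := by
          refine Finset.sum_congr rfl fun i _ => ?_
          rw [pow_entry_expand _ m i i, map_sum]
    _ = ∑ i, ∑ f : Fin m → Fin k, ω (((List.range (m + 1)).map (fun t =>
            (Matrix.of fun i j => τ (star (b i) * b j) • a i)
              (pext i f i t) (pext i f i (t + 1)))).prod) := by
          exact Finset.sum_congr rfl fun i _ => Finset.sum_congr rfl fun f _ => key i f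
    _ = ∑ j, ω ((((Matrix.of fun i j => τ (star (b i) * b j) • a i) :
            Matrix (Fin k) (Fin k) C) ^ (m + 1)) j j) := by
          refine (Finset.sum_congr rfl fun i _ => ?_)
          rw [pow_entry_expand _ m i i, map_sum]
    _ = ∑ j, ω (((((Matrix.diagonal a) * (hPSD.sqrt.map (algebraMap ℂ C)))
            * (hPSD.sqrt.map (algebraMap ℂ C))) ^ (m + 1)) j j) := by rw [hN']
    _ = ∑ i, ω ((((hPSD.sqrt.map (algebraMap ℂ C))
            * ((Matrix.diagonal a) * (hPSD.sqrt.map (algebraMap ℂ C)))) ^ (m + 1)) i i) :=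
          (aux_cyc_pow ω hωtr _ _ m).symm
    _ = ∑ i, ω ((((Matrix.of fun i j : Fin k =>
            ∑ s, (hPSD.sqrt i s * hPSD.sqrt s j) • a s) ^ (m + 1)) i i)) := by rw [hM]
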